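/- Dual-norm smoothing of the budget constraint: let $B$, $R = \mathrm{diag}(r)$ with $r > 0$, positive diagonal $C$, demand $d$, budget $W \ge 0$, and $p, q \in (1,\infty)$ with $1/p + 1/q = 1$. Then $\max_{r' \ge 0, \|Cr'\|_q \le W} \min_{B^Tf=d} f^T(R+\mathrm{diag}(r'))f = \min_{B^Tf=d}\left(f^TRf + W\|C^{-1/2}f\|_{2p}^2\right)$. -/

import Mathlib

open scoped Matrix

lemma exists_feasible_vec {V E : Type*} [Fintype V] [Fintype E] [DecidableEq V]
    (B : Matrix E V ℝ)
    (hconn : ∀ x : V → ℝ, B.mulVec x = 0 → ∃ c : ℝ, ∀ v, x v = c)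
    (d : V → ℝ) (hd : ∑ v, d v = 0) :
    ∃ f : E → ℝ, B.transpose.mulVec f = d := by
  classical
  set K : Submodule ℝ (V → ℝ) := LinearMap.range (Matrix.mulVecLin B.transpose) with hK
  have hdK : d ∈ K := by
    by_contra hdK
    obtain ⟨ψ, hψd, hψK⟩ := Submodule.exists_dual_map_eq_bot_of_notMem hdK inferInstance
    set g : V → ℝ := fun v => ψ (Pi.single v 1) with hgdef
    have hψ : ∀ x : V → ℝ, ψ x = ∑ v, x v * g v := by
      intro x
      conv_lhs => rw [pi_eq_sum_univ x]
      rw [map_sum]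
      simp only [map_smul, smul_eq_mul, hgdef]
      apply Finset.sum_congr rfl
      intro v _
      congr 1
      congr 1
      funext j
      simp [Pi.single_apply, eq_comm]
    have hψzero : ∀ h : E → ℝ, ψ (B.transpose.mulVec h) = 0 := by
      intro h
      have : B.transpose.mulVec h ∈ K := ⟨h, rfl⟩
      have : ψ (B.transpose.mulVec h) ∈ K.map ψ := Submodule.mem_map_of_mem this
      rw [hψK] at this
      simpa using this
    have key : ∀ h : E → ℝ, ∑ v, (B.transpose.mulVec h) v * g v
        = ∑ e, h e * (B.mulVec g) e := by
      intro h
      simp only [Matrix.mulVec, dotProduct, Matrix.transpose_apply,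
        Finset.sum_mul, Finset.mul_sum]
      rw [Finset.sum_comm]
      apply Finset.sum_congr rfl
      intro e _
      apply Finset.sum_congr rfl
      intro v _
      ring
    have hBg : B.mulVec g = 0 := by
      have h0 : ∑ e, (B.mulVec g) e * (B.mulVec g) e = 0 := by
        rw [← key (B.mulVec g), ← hψ, hψzero]
      funext e
      have hsq : ∀ e : E, 0 ≤ (B.mulVec g) e * (B.mulVec g) e := fun e => mul_self_nonneg _
      have := (Finset.sum_eq_zero_iff_of_nonneg (fun e _ => hsq e)).mp h0 e (Finset.mem_univ e)
      have := mul_self_eq_zero.mp this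
      simpa using this
    obtain ⟨c, hc⟩ := hconn g hBg
    apply hψd
    rw [hψ d]
    calc ∑ v, d v * g v = ∑ v, d v * c := by
          apply Finset.sum_congr rfl; intro v _; rw [hc v]
      _ = (∑ v, d v) * c := by rw [Finset.sum_mul]
      _ = 0 := by rw [hd]; ring
  obtain ⟨f, hf⟩ := hdK
  exact ⟨f, hf⟩

lemma stationarity_aux {E : Type*} [Fintype E]
    (r C : E → ℝ) (hC : ∀ e, 0 < C e) (W p : ℝ) (hp : 1 < p)
    (fs δ : E → ℝ) (hS : 0 < ∑ e, (fs e ^ 2 / C e) ^ p)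
    (hmin : ∀ t : ℝ,
      (∑ e, r e * fs e ^ 2) + W * (∑ e, (fs e ^ 2 / C e) ^ p) ^ (1 / p) ≤
      (∑ e, r e * (fs e + t * δ e) ^ 2) +
        W * (∑ e, ((fs e + t * δ e) ^ 2 / C e) ^ p) ^ (1 / p)) :
    ∑ e, (r e + W * (∑ e', (fs e' ^ 2 / C e') ^ p) ^ (1 / p - 1) *
        (fs e ^ 2 / C e) ^ (p - 1) / C e) * (fs e * δ e) = 0 := by
  classical
  have hp0 : (0 : ℝ) < p := lt_trans one_pos hp
  set S : ℝ := ∑ e, (fs e ^ 2 / C e) ^ p with hSdef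
  set φ : ℝ → ℝ := fun t => (∑ e, r e * (fs e + t * δ e) ^ 2) +
      W * (∑ e, ((fs e + t * δ e) ^ 2 / C e) ^ p) ^ (1 / p) with hφdef
  have h1 : ∀ e : E, HasDerivAt (fun t : ℝ => fs e + t * δ e) (δ e) 0 := by
    intro e
    simpa using ((hasDerivAt_id (0 : ℝ)).mul_const (δ e)).const_add (fs e)
  have h2 : ∀ e : E, HasDerivAt (fun t : ℝ => (fs e + t * δ e) ^ 2)
      (2 * fs e * δ e) 0 := by
    intro e
    have := (h1 e).pow 2
    norm_num at this
    exact this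
  have h3 : ∀ e : E, HasDerivAt (fun t : ℝ => (fs e + t * δ e) ^ 2 / C e)
      (2 * fs e * δ e / C e) 0 := fun e => (h2 e).div_const (C e)
  have h4 : ∀ e : E, HasDerivAt (fun t : ℝ => ((fs e + t * δ e) ^ 2 / C e) ^ p)
      ((2 * fs e * δ e / C e) * p * (fs e ^ 2 / C e) ^ (p - 1)) 0 := by
    intro e
    have := (h3 e).rpow_const (p := p) (Or.inr hp.le)
    simpa using this
  have hsum : HasDerivAt (fun t : ℝ => ∑ e, ((fs e + t * δ e) ^ 2 / C e) ^ p)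
      (∑ e, (2 * fs e * δ e / C e) * p * (fs e ^ 2 / C e) ^ (p - 1)) 0 :=
    HasDerivAt.fun_sum fun e _ => h4 e
  have hout : HasDerivAt (fun t : ℝ => (∑ e, ((fs e + t * δ e) ^ 2 / C e) ^ p) ^ (1 / p))
      ((∑ e, (2 * fs e * δ e / C e) * p * (fs e ^ 2 / C e) ^ (p - 1)) * (1 / p) *
        S ^ (1 / p - 1)) 0 := by
    have hne : (∑ e, ((fs e + (0:ℝ) * δ e) ^ 2 / C e) ^ p) ≠ 0 := by
      simpa using hS.ne'
    have := hsum.rpow_const (p := 1 / p) (Or.inl hne)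
    simpa using this
  have hquad : HasDerivAt (fun t : ℝ => ∑ e, r e * (fs e + t * δ e) ^ 2)
      (∑ e, r e * (2 * fs e * δ e)) 0 :=
    HasDerivAt.fun_sum fun e _ => (h2 e).const_mul (r e)
  have hφ : HasDerivAt φ
      ((∑ e, r e * (2 * fs e * δ e)) +
        W * ((∑ e, (2 * fs e * δ e / C e) * p * (fs e ^ 2 / C e) ^ (p - 1)) * (1 / p) *
          S ^ (1 / p - 1))) 0 := hquad.add (hout.const_mul W)
  have hlocmin : IsLocalMin φ 0 := by
    apply Filter.Eventually.of_forall
    intro t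
    have := hmin t
    simpa [hφdef] using this
  have hD0 := hlocmin.hasDerivAt_eq_zero hφ
  have halg : (∑ e, r e * (2 * fs e * δ e)) +
        W * ((∑ e, (2 * fs e * δ e / C e) * p * (fs e ^ 2 / C e) ^ (p - 1)) * (1 / p) *
          S ^ (1 / p - 1))
      = 2 * ∑ e, (r e + W * S ^ (1 / p - 1) * (fs e ^ 2 / C e) ^ (p - 1) / C e) *
          (fs e * δ e) := by
    rw [Finset.mul_sum]
    have : W * ((∑ e, (2 * fs e * δ e / C e) * p * (fs e ^ 2 / C e) ^ (p - 1)) * (1 / p) *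
          S ^ (1 / p - 1))
        = ∑ e, (W * (1 / p) * S ^ (1 / p - 1)) *
            ((2 * fs e * δ e / C e) * p * (fs e ^ 2 / C e) ^ (p - 1)) := by
      rw [← Finset.mul_sum]
      ring
    rw [this, ← Finset.sum_add_distrib]
    apply Finset.sum_congr rfl
    intro e _
    have hCe := (hC e).ne'
    field_simp
  rw [halg] at hD0
  rcases mul_eq_zero.mp hD0 with h | h
  · norm_num at h
  · exact h

lemma exists_min_energy {E : Type*} [Fintype E]
    (A : Set (E → ℝ)) (hA : IsClosed A) (hne : A.Nonempty)
    (r C : E → ℝ) (hr : ∀ e, 0 < r e) (hC : ∀ e, 0 < C e)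
    (W p : ℝ) (hW : 0 ≤ W) (hp : 1 < p) :
    ∃ fs ∈ A, ∀ f ∈ A,
      (∑ e, r e * fs e ^ 2) + W * (∑ e, (fs e ^ 2 / C e) ^ p) ^ (1 / p) ≤
      (∑ e, r e * f e ^ 2) + W * (∑ e, (f e ^ 2 / C e) ^ p) ^ (1 / p) := by
  classical
  set g : (E → ℝ) → ℝ := fun f =>
    (∑ e, r e * f e ^ 2) + W * (∑ e, (f e ^ 2 / C e) ^ p) ^ (1 / p) with hgdef
  have hgnonneg : ∀ f, 0 ≤ g f := by
    intro f
    apply add_nonneg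
    · exact Finset.sum_nonneg fun e _ => mul_nonneg (hr e).le (sq_nonneg _)
    · exact mul_nonneg hW (Real.rpow_nonneg
        (Finset.sum_nonneg fun e _ => Real.rpow_nonneg
          (div_nonneg (sq_nonneg _) (hC e).le) _) _)
  have hterm : ∀ f, ∀ e : E, r e * f e ^ 2 ≤ g f := by
    intro f e
    have h1 : r e * f e ^ 2 ≤ ∑ e', r e' * f e' ^ 2 :=
      Finset.single_le_sum (fun e' _ => mul_nonneg (hr e').le (sq_nonneg _))
        (Finset.mem_univ e)
    have h2 : (0:ℝ) ≤ W * (∑ e, (f e ^ 2 / C e) ^ p) ^ (1 / p) :=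
      mul_nonneg hW (Real.rpow_nonneg
        (Finset.sum_nonneg fun e _ => Real.rpow_nonneg
          (div_nonneg (sq_nonneg _) (hC e).le) _) _)
    simp only [hgdef]
    linarith
  have hgcont : Continuous g := by
    apply Continuous.add
    · exact continuous_finset_sum _ fun e _ =>
        continuous_const.mul ((continuous_apply e).pow 2)
    · apply continuous_const.mul
      apply Continuous.rpow_const
      · exact continuous_finset_sum _ fun e _ =>
          Continuous.rpow_const (by fun_prop : Continuous fun x : E → ℝ => x e ^ 2 / C e)
            (fun _ => Or.inr (le_of_lt (lt_trans one_pos hp)))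
      · intro _
        exact Or.inr (by positivity)
  obtain ⟨f0, hf0⟩ := hne
  set m : E → ℝ := fun e => Real.sqrt (g f0 / r e) with hmdef
  set Kbox : Set (E → ℝ) := Set.univ.pi fun e => Set.Icc (-(m e)) (m e) with hKbox
  have hKboxcompact : IsCompact Kbox := isCompact_univ_pi fun e => isCompact_Icc
  set K : Set (E → ℝ) := {f ∈ A | g f ≤ g f0} with hKdef
  have hKsub : K ⊆ Kbox := by
    rintro f ⟨hfA, hfg⟩
    intro e _
    have h1 : r e * f e ^ 2 ≤ g f0 := le_trans (hterm f e) hfg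
    have h2 : f e ^ 2 ≤ g f0 / r e := by
      rw [le_div_iff₀ (hr e)]
      linarith [h1]
    have h3 : m e ^ 2 = g f0 / r e := Real.sq_sqrt (div_nonneg (hgnonneg f0) (hr e).le)
    have h4 : f e ^ 2 ≤ m e ^ 2 := by rw [h3]; exact h2
    have h5 : 0 ≤ m e := Real.sqrt_nonneg _
    constructor
    · nlinarith
    · nlinarith
  have hKclosed : IsClosed K :=
    IsClosed.inter hA (isClosed_le hgcont continuous_const)
  have hKcompact : IsCompact K := hKboxcompact.of_isClosed_subset hKclosed hKsub
  have hKne : K.Nonempty := ⟨f0, hf0, le_refl _⟩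
  obtain ⟨fs, hfsK, hfsmin⟩ := hKcompact.exists_isMinOn hKne hgcont.continuousOn
  refine ⟨fs, hfsK.1, ?_⟩
  intro f hf
  rcases le_or_gt (g f) (g f0) with h | h
  · exact (isMinOn_iff.mp hfsmin) f ⟨hf, h⟩
  · exact le_trans ((isMinOn_iff.mp hfsmin) f0 ⟨hf0, le_refl _⟩) h.le

/-- Dual-norm smoothing of the budget constraint: for conjugate exponents
`p, q ∈ (1, ∞)`,
`max_{r' ≥ 0, ‖Cr'‖_q ≤ W} min_{Bᵀf = d} fᵀ(R + diag r')f
  = min_{Bᵀf = d} (fᵀRf + W ‖C^{-1/2} f‖_{2p}²)`,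
stated as existence of a common value attained on both sides. -/
theorem budget_energy_minimax_lq {V E : Type*} [Fintype V] [Fintype E] [DecidableEq V]
    (B : Matrix E V ℝ)
    (hrows : ∀ e : E, ∃ u v : V, u ≠ v ∧
      ∀ w, B e w = (if w = v then (1 : ℝ) else 0) - (if w = u then 1 else 0))
    (hconn : ∀ x : V → ℝ, B.mulVec x = 0 → ∃ c : ℝ, ∀ v, x v = c)
    (d : V → ℝ) (hd : ∑ v, d v = 0)
    (r : E → ℝ) (hr : ∀ e, 0 < r e)
    (C : E → ℝ) (hC : ∀ e, 0 < C e)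
    (W : ℝ) (hW : 0 ≤ W)
    (p q : ℝ) (hp : 1 < p) (hq : 1 < q) (hpq : 1 / p + 1 / q = 1) :
    ∃ t : ℝ,
      IsGreatest {x : ℝ | ∃ r' : E → ℝ, (∀ e, 0 ≤ r' e) ∧
        (∑ e, (C e * r' e) ^ q) ^ (1 / q) ≤ W ∧
        x = sInf {y : ℝ | ∃ f : E → ℝ, B.transpose.mulVec f = d ∧
          y = ∑ e, (r e + r' e) * f e ^ 2}} t ∧
      IsLeast {y : ℝ | ∃ f : E → ℝ, B.transpose.mulVec f = d ∧
        y = (∑ e, r e * f e ^ 2) + W * (∑ e, (f e ^ 2 / C e) ^ p) ^ (1 / p)} t := by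
  classical
  have hp0 : (0:ℝ) < p := lt_trans one_pos hp
  have hq0 : (0:ℝ) < q := lt_trans one_pos hq
  have hpqc : Real.HolderConjugate p q := ⟨by
    rw [inv_one, ← one_div, ← one_div]; exact hpq, hp0, hq0⟩
  have hpqmul : p + q = p * q := by
    have h := hpq
    field_simp at h
    linarith
  have hexp1 : (1 / p - 1) * q = -1 := by
    field_simp
    linarith
  have hexp2 : (p - 1) * q = p := by
    nlinarith
  -- feasible set
  set A : Set (E → ℝ) := {f | B.transpose.mulVec f = d} with hAdef
  have hAclosed : IsClosed A := by
    have hcont : Continuous fun f : E → ℝ => B.transpose.mulVec f := by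
      have heq : (fun f : E → ℝ => B.transpose.mulVec f)
          = fun f => B.transpose.mulVecLin f := by
        funext f; rw [Matrix.mulVecLin_apply]
      rw [heq]
      exact LinearMap.continuous_of_finiteDimensional _
    exact isClosed_eq hcont continuous_const
  have hAne : A.Nonempty := exists_feasible_vec B hconn d hd
  obtain ⟨fs, hfsA, hfsmin⟩ := exists_min_energy A hAclosed hAne r C hr hC W p hW hp
  have hfsA' : B.transpose.mulVec fs = d := hfsA
  set S : ℝ := ∑ e, (fs e ^ 2 / C e) ^ p with hSdef
  have hS0 : (0:ℝ) ≤ S :=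
    Finset.sum_nonneg fun e _ => Real.rpow_nonneg (div_nonneg (sq_nonneg _) (hC e).le) _
  set r' : E → ℝ := fun e => W * S ^ (1 / p - 1) * (fs e ^ 2 / C e) ^ (p - 1) / C e
    with hr'def
  have hr'0 : ∀ e, 0 ≤ r' e := by
    intro e
    apply div_nonneg _ (hC e).le
    apply mul_nonneg (mul_nonneg hW (Real.rpow_nonneg hS0 _))
    exact Real.rpow_nonneg (div_nonneg (sq_nonneg _) (hC e).le) _
  -- Hölder
  have holder : ∀ (r'' : E → ℝ), (∀ e, 0 ≤ r'' e) →
      (∑ e, (C e * r'' e) ^ q) ^ (1 / q) ≤ W →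
      ∀ f : E → ℝ, (∑ e, r'' e * f e ^ 2) ≤ W * (∑ e, (f e ^ 2 / C e) ^ p) ^ (1 / p) := by
    intro r'' h0 hn f
    have hnn : (0:ℝ) ≤ (∑ e, (f e ^ 2 / C e) ^ p) ^ (1 / p) :=
      Real.rpow_nonneg (Finset.sum_nonneg fun e _ =>
        Real.rpow_nonneg (div_nonneg (sq_nonneg _) (hC e).le) _) _
    calc ∑ e, r'' e * f e ^ 2
        = ∑ e, (f e ^ 2 / C e) * (C e * r'' e) := by
          apply Finset.sum_congr rfl
          intro e _
          have hCe := (hC e).ne'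
          field_simp
      _ ≤ (∑ e, (f e ^ 2 / C e) ^ p) ^ (1 / p) * (∑ e, (C e * r'' e) ^ q) ^ (1 / q) := by
          apply Real.inner_le_Lp_mul_Lq_of_nonneg Finset.univ hpqc
          · intro e _; exact div_nonneg (sq_nonneg _) (hC e).le
          · intro e _; exact mul_nonneg (hC e).le (h0 e)
      _ ≤ (∑ e, (f e ^ 2 / C e) ^ p) ^ (1 / p) * W := by
          exact mul_le_mul_of_nonneg_left hn hnn
      _ = W * (∑ e, (f e ^ 2 / C e) ^ p) ^ (1 / p) := mul_comm _ _
  -- norm bound of r'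
  have hr'norm : (∑ e, (C e * r' e) ^ q) ^ (1 / q) ≤ W := by
    by_cases hWS : W = 0 ∨ S = 0
    · have hr'z : ∀ e, r' e = 0 := by
        intro e
        rcases hWS with h | h
        · simp [hr'def, h]
        · have hpe : 1 / p - 1 ≠ 0 := by
            have h1p : 1 / p < 1 := by
              rw [div_lt_one hp0]; exact hp
            intro hcon
            have : (1:ℝ)/p = 1 := by linarith [sub_eq_zero.mp hcon]
            linarith
          have hz : S ^ (1 / p - 1) = 0 := by rw [h]; exact Real.zero_rpow hpe
          show W * S ^ (1 / p - 1) * (fs e ^ 2 / C e) ^ (p - 1) / C e = 0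
          rw [hz, mul_zero, zero_mul, zero_div]
      have : ∀ e : E, (C e * r' e) ^ q = 0 := by
        intro e
        rw [hr'z e, mul_zero, Real.zero_rpow hq0.ne']
      rw [Finset.sum_congr rfl (fun e _ => this e), Finset.sum_const, smul_zero,
        Real.zero_rpow (one_div_ne_zero hq0.ne')]
      exact hW
    · push_neg at hWS
      obtain ⟨hWne, hSne⟩ := hWS
      have hWpos : 0 < W := lt_of_le_of_ne hW (Ne.symm hWne)
      have hSpos : 0 < S := lt_of_le_of_ne hS0 (Ne.symm hSne)
      have hterm : ∀ e : E, (C e * r' e) ^ q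
          = W ^ q * S⁻¹ * (fs e ^ 2 / C e) ^ p := by
        intro e
        have hCe := (hC e).ne'
        have h1 : C e * r' e = W * S ^ (1 / p - 1) * (fs e ^ 2 / C e) ^ (p - 1) := by
          rw [hr'def]
          field_simp
        rw [h1]
        rw [Real.mul_rpow (mul_nonneg hW (Real.rpow_nonneg hS0 _))
          (Real.rpow_nonneg (div_nonneg (sq_nonneg _) (hC e).le) _),
          Real.mul_rpow hW (Real.rpow_nonneg hS0 _),
          ← Real.rpow_mul hS0, ← Real.rpow_mul
            (div_nonneg (sq_nonneg _) (hC e).le),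
          hexp1, hexp2, Real.rpow_neg_one]
      have hsumval : ∑ e, (C e * r' e) ^ q = W ^ q := by
        rw [Finset.sum_congr rfl (fun e _ => hterm e), ← Finset.mul_sum, ← hSdef,
          mul_assoc, inv_mul_cancel₀ hSne, mul_one]
      rw [hsumval, ← Real.rpow_mul hW]
      have hqq : q * (1 / q) = 1 := by field_simp
      rw [hqq, Real.rpow_one]
  -- equality in Hölder at fs
  have heq : (∑ e, r' e * fs e ^ 2) = W * S ^ (1 / p) := by
    have hterm : ∀ e : E, r' e * fs e ^ 2
        = (W * S ^ (1 / p - 1)) * (fs e ^ 2 / C e) ^ p := by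
      intro e
      have hCe := (hC e).ne'
      have ha : (0:ℝ) ≤ fs e ^ 2 / C e := div_nonneg (sq_nonneg _) (hC e).le
      have hsplit : (fs e ^ 2 / C e) ^ p
          = (fs e ^ 2 / C e) ^ (p - 1) * (fs e ^ 2 / C e) := by
        have h := Real.rpow_add' ha (show (p - 1) + 1 ≠ 0 by
          simpa using hp0.ne')
        rw [sub_add_cancel] at h
        rw [h, Real.rpow_one]
      rw [hsplit, hr'def]
      field_simp
    rw [Finset.sum_congr rfl (fun e _ => hterm e), ← Finset.mul_sum, ← hSdef]
    have hsp : S ^ (1 / p - 1) * S = S ^ (1 / p) := by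
      have h := Real.rpow_add' hS0 (show (1 / p - 1) + 1 ≠ 0 by
        simpa using one_div_ne_zero hp0.ne')
      rw [sub_add_cancel] at h
      rw [h, Real.rpow_one]
    rw [mul_assoc, hsp]
  -- stationarity
  have hstat : ∀ δ : E → ℝ, B.transpose.mulVec δ = 0 →
      ∑ e, (r e + r' e) * (fs e * δ e) = 0 := by
    intro δ hδ
    by_cases hSz : S = 0
    · have hfs0 : ∀ e : E, fs e = 0 := by
        intro e
        have hforall := (Finset.sum_eq_zero_iff_of_nonneg
          (fun e' (_ : e' ∈ Finset.univ) =>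
            Real.rpow_nonneg (div_nonneg (sq_nonneg (fs e')) (hC e').le) p)).mp
          (by rw [← hSdef]; exact hSz)
        have h1 : (fs e ^ 2 / C e) ^ p = 0 := hforall e (Finset.mem_univ e)
        have h2 : fs e ^ 2 / C e = 0 :=
          ((Real.rpow_eq_zero_iff_of_nonneg
            (div_nonneg (sq_nonneg _) (hC e).le)).mp h1).1
        have hCe := (hC e).ne'
        field_simp at h2
        simpa using h2
      apply Finset.sum_eq_zero
      intro e _
      rw [hfs0 e]
      ring
    · have hSpos : 0 < S := lt_of_le_of_ne hS0 (Ne.symm hSz)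
      have := stationarity_aux r C hC W p hp fs δ hSpos ?_
      · exact this
      · intro t
        have hfeas : B.transpose.mulVec (fun e => fs e + t * δ e) = d := by
          have heq2 : (fun e => fs e + t * δ e) = fs + t • δ := by
            funext e; simp [smul_eq_mul]
          rw [heq2, Matrix.mulVec_add, Matrix.mulVec_smul, hfsA', hδ]
          simp
        exact hfsmin _ hfeas
  -- fs minimizes the smoothed quadratic
  have hquad : ∀ f, B.transpose.mulVec f = d →
      (∑ e, (r e + r' e) * fs e ^ 2) ≤ ∑ e, (r e + r' e) * f e ^ 2 := by
    intro f hf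
    have hδ : B.transpose.mulVec (fun e => f e - fs e) = 0 := by
      have heq2 : (fun e => f e - fs e) = f - fs := rfl
      rw [heq2, Matrix.mulVec_sub, hf, hfsA', sub_self]
    have hcross := hstat _ hδ
    have hexpand : ∑ e, (r e + r' e) * f e ^ 2
        = (∑ e, (r e + r' e) * fs e ^ 2)
          + 2 * (∑ e, (r e + r' e) * (fs e * (f e - fs e)))
          + ∑ e, (r e + r' e) * (f e - fs e) ^ 2 := by
      rw [Finset.mul_sum, ← Finset.sum_add_distrib, ← Finset.sum_add_distrib]
      apply Finset.sum_congr rfl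
      intro e _
      ring
    have hnn : (0:ℝ) ≤ ∑ e, (r e + r' e) * (f e - fs e) ^ 2 :=
      Finset.sum_nonneg fun e _ =>
        mul_nonneg (add_nonneg (hr e).le (hr'0 e)) (sq_nonneg _)
    rw [hexpand, hcross]
    linarith
  -- split sums
  have hsplitsum : ∀ f : E → ℝ, ∀ rr : E → ℝ, ∑ e, (r e + rr e) * f e ^ 2
      = (∑ e, r e * f e ^ 2) + ∑ e, rr e * f e ^ 2 := by
    intro f rr
    rw [← Finset.sum_add_distrib]
    apply Finset.sum_congr rfl
    intro e _
    ring
  refine ⟨(∑ e, r e * fs e ^ 2) + W * S ^ (1 / p), ⟨⟨r', hr'0, hr'norm, ?_⟩, ?_⟩,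
    ⟨fs, hfsA', by rw [hSdef]⟩, ?_⟩
  · -- value attained on the left
    have hleast : IsLeast {y : ℝ | ∃ f : E → ℝ, B.transpose.mulVec f = d ∧
        y = ∑ e, (r e + r' e) * f e ^ 2} (∑ e, (r e + r' e) * fs e ^ 2) := by
      constructor
      · exact ⟨fs, hfsA', rfl⟩
      · rintro y ⟨f, hf, rfl⟩
        exact hquad f hf
    rw [hleast.csInf_eq, hsplitsum fs r', heq]
  · -- upper bound
    rintro x ⟨r'', h0'', hn'', rfl⟩
    have hbdd : BddBelow {y : ℝ | ∃ f : E → ℝ, B.transpose.mulVec f = d ∧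
        y = ∑ e, (r e + r'' e) * f e ^ 2} := by
      refine ⟨0, ?_⟩
      rintro y ⟨f, hf, rfl⟩
      exact Finset.sum_nonneg fun e _ =>
        mul_nonneg (add_nonneg (hr e).le (h0'' e)) (sq_nonneg _)
    have hmem : (∑ e, (r e + r'' e) * fs e ^ 2) ∈ {y : ℝ | ∃ f : E → ℝ,
        B.transpose.mulVec f = d ∧ y = ∑ e, (r e + r'' e) * f e ^ 2} := ⟨fs, hfsA', rfl⟩
    have h1 := csInf_le hbdd hmem
    have h2 := holder r'' h0'' hn'' fs
    rw [hsplitsum fs r''] at h1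
    calc sInf {y : ℝ | ∃ f : E → ℝ, B.transpose.mulVec f = d ∧
          y = ∑ e, (r e + r'' e) * f e ^ 2}
        ≤ (∑ e, r e * fs e ^ 2) + ∑ e, r'' e * fs e ^ 2 := h1
      _ ≤ (∑ e, r e * fs e ^ 2) + W * S ^ (1 / p) := by
          rw [hSdef]
          linarith [h2]
  · -- lower bound on the right
    rintro y ⟨f, hf, rfl⟩
    have := hfsmin f hf
    rw [hSdef]
    exact this
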